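/- Let (F,σ) be a difference field whose constants K form a field, let a ∈ F∖{0} and f₁,…,f_d ∈ F. Then V(a,f,F) = {(c₁,…,c_d,g) ∈ K^d × F | σ(g) − a·g = c₁f₁ + ⋯ + c_d f_d} is a K-vector space of dimension at most d+1. -/

import Mathlib

open scoped BigOperators

set_option maxHeartbeats 1000000 in
set_option synthInstance.maxHeartbeats 400000 in
/-- The solution set of a first-order parameterized linear difference equation
in a difference field whose constants form the field `K` is a `K`-vector space
of dimension at most `d + 1`. -/
theorem fplde_solution_space {K F : Type*} [Field K] [Field F] [Algebra K F]
    (σ : F ≃+* F)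
    (hK : Set.range (algebraMap K F) = {c : F | σ c = c})
    (a : F) (ha : a ≠ 0) (d : ℕ) (f : Fin d → F) :
    ∃ V : Submodule K ((Fin d → K) × F),
      (V : Set ((Fin d → K) × F)) =
        {p : (Fin d → K) × F | σ p.2 - a * p.2 = ∑ j, algebraMap K F (p.1 j) * f j} ∧
      Module.rank K V ≤ d + 1 := by
  have hσ : ∀ k : K, σ (algebraMap K F k) = algebraMap K F k := by
    intro k
    have : algebraMap K F k ∈ Set.range (algebraMap K F) := ⟨k, rfl⟩
    rwa [hK] at this
  -- the defining linear map
  set L : ((Fin d → K) × F) →ₗ[K] F :=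
    { toFun := fun p => σ p.2 - a * p.2 - ∑ j, algebraMap K F (p.1 j) * f j
      map_add' := by
        intro p q
        simp only [Prod.snd_add, map_add, Prod.fst_add, Pi.add_apply, add_mul,
          Finset.sum_add_distrib, mul_add]
        ring
      map_smul' := by
        intro k p
        simp only [Prod.smul_snd, Prod.smul_fst, Pi.smul_apply, smul_eq_mul,
          RingHom.id_apply]
        simp only [Algebra.smul_def, map_mul, hσ, Finset.mul_sum, mul_sub, mul_assoc]
        ring } with hL
  refine ⟨LinearMap.ker L, ?_, ?_⟩
  · ext p
    simp [hL, LinearMap.mem_ker, sub_eq_zero, LinearMap.coe_mk, AddHom.coe_mk]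
  · -- projection to the parameters (embedded back into the product to stay in
    -- a single universe)
    set π : LinearMap.ker L →ₗ[K] ((Fin d → K) × F) :=
      (LinearMap.inl K (Fin d → K) F).comp
        ((LinearMap.fst K (Fin d → K) F).comp (LinearMap.ker L).subtype) with hπ
    have hrn := LinearMap.rank_range_add_rank_ker π
    have h1 : Module.rank K (LinearMap.range π) ≤ d := by
      have hle : LinearMap.range π ≤ LinearMap.range (LinearMap.inl K (Fin d → K) F) :=
        LinearMap.range_comp_le_range _ _
      refine (Submodule.rank_mono hle).trans ?_
      have e := (LinearEquiv.ofInjective (LinearMap.inl K (Fin d → K) F)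
        LinearMap.inl_injective).lift_rank_eq
      rw [rank_fin_fun] at e
      have e' : Module.rank K (LinearMap.range (LinearMap.inl K (Fin d → K) F)) = d := by
        have := e.symm
        rwa [Cardinal.lift_natCast, Cardinal.lift_eq_nat_iff] at this
      rw [e']
    have h2 : Module.rank K (LinearMap.ker π) ≤ 1 := by
      -- elements of ker π are of the form ((0, g), _) with σ g = a g
      have key : ∀ v : LinearMap.ker π, ((v : LinearMap.ker L) : (Fin d → K) × F).1 = 0 ∧
          σ ((v : LinearMap.ker L) : (Fin d → K) × F).2
            = a * ((v : LinearMap.ker L) : (Fin d → K) × F).2 := by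
        rintro ⟨⟨p, hp⟩, hv⟩
        have hv' : π ⟨p, hp⟩ = 0 := hv
        simp only [hπ, LinearMap.comp_apply, Submodule.subtype_apply,
          LinearMap.fst_apply, LinearMap.inl_apply, Prod.mk_eq_zero] at hv'
        have hc : p.1 = 0 := hv'.1
        have hker := hp
        simp only [hL, LinearMap.mem_ker, LinearMap.coe_mk, AddHom.coe_mk] at hker
        rw [hc] at hker
        simp only [Pi.zero_apply, map_zero, zero_mul, Finset.sum_const_zero] at hker
        refine ⟨hc, ?_⟩
        have := sub_eq_zero.mp (by simpa [sub_eq_zero] using hker)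
        simpa [sub_eq_zero] using hker
      suffices h : ∃ v₀ : LinearMap.ker π, ∀ v, ∃ r : K, r • v₀ = v by
        haveI := Module.Free.of_divisionRing K (LinearMap.ker π)
        exact (rank_le_one_iff (K := K) (V := LinearMap.ker π)).mpr h
      by_cases hbot : ∀ v : LinearMap.ker π, v = 0
      · exact ⟨0, fun v => ⟨0, by rw [hbot v]; simp⟩⟩
      · push_neg at hbot
        obtain ⟨v₀, hv₀⟩ := hbot
        refine ⟨v₀, fun v => ?_⟩
        obtain ⟨hc₀, hg₀⟩ := key v₀
        obtain ⟨hc, hg⟩ := key v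
        set g₀ := ((v₀ : LinearMap.ker L) : (Fin d → K) × F).2 with hgdef
        set g := ((v : LinearMap.ker L) : (Fin d → K) × F).2
        have hg₀ne : g₀ ≠ 0 := by
          intro h
          apply hv₀
          have h0 : ((v₀ : LinearMap.ker L) : (Fin d → K) × F) = 0 := Prod.ext hc₀ h
          exact Subtype.ext (Subtype.ext h0)
        -- g / g₀ is a constant
        have hconst : σ (g * g₀⁻¹) = g * g₀⁻¹ := by
          rw [map_mul, map_inv₀, hg, hg₀, mul_inv]
          field_simp
        have hmem : g * g₀⁻¹ ∈ Set.range (algebraMap K F) := by rw [hK]; exact hconst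
        obtain ⟨r, hr⟩ := hmem
        refine ⟨r, ?_⟩
        apply Subtype.ext; apply Subtype.ext
        show r • ((v₀ : LinearMap.ker L) : (Fin d → K) × F)
          = ((v : LinearMap.ker L) : (Fin d → K) × F)
        refine Prod.ext ?_ ?_
        · show r • ((v₀ : LinearMap.ker L) : (Fin d → K) × F).1
            = ((v : LinearMap.ker L) : (Fin d → K) × F).1
          rw [hc₀, hc]; simp
        · show r • g₀ = g
          rw [Algebra.smul_def, hr]
          field_simp
    calc Module.rank K (LinearMap.ker L)
        = Module.rank K (LinearMap.range π) + Module.rank K (LinearMap.ker π) := hrn.symm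
      _ ≤ d + 1 := add_le_add h1 h2
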